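/- Let κ > 0, set α(t) = ∫₀^{κ√t} e^{-r²/2} dr and D(t) = (1/(2t²))·∫₀^∞ e^{-r²/(2t)} r³ sinh(κr) log(sinh(κr)/(κr)) dr for t > 0. Then for every t > 0: D(t) < (1/2)κ²t(κ²t + 5) + (1/2)κ t^{1/2}(κ⁴t² + 6κ²t + 3) e^{κ²t/2} α(t) - (1/2)√(π/2)·κ t^{1/2}(κ²t + 3) e^{κ²t/2} · log(1 + √(π/2)·κ²t(κ²t + 3) e^{κ²t/2} / (κ t^{1/2} + (κ²t + 1) e^{κ²t/2} α(t))). -/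

import Mathlib

open Real MeasureTheory

/-- `α(t) = ∫₀^{κ√t} e^{-r²/2} dr`. -/
noncomputable def alphaFun (κ t : ℝ) : ℝ :=
  ∫ r in (0 : ℝ)..(κ * Real.sqrt t), Real.exp (-r ^ 2 / 2)

/-- `D(t) = (1/(2t²)) ∫₀^∞ e^{-r²/(2t)} r³ sinh(κr) log(sinh(κr)/(κr)) dr`
(the derivative of `η`). -/
noncomputable def etaDeriv (κ t : ℝ) : ℝ :=
  (1 / (2 * t ^ 2)) * ∫ r in Set.Ioi (0 : ℝ),
    Real.exp (-r ^ 2 / (2 * t)) * r ^ 3 * Real.sinh (κ * r) *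
      Real.log (Real.sinh (κ * r) / (κ * r))

open Real MeasureTheory Set Filter Topology

noncomputable def Efun (x : ℝ) : ℝ := ∫ u in (0:ℝ)..x, Real.exp (-u ^ 2 / 2)

lemma contE : Continuous fun u : ℝ => Real.exp (-u ^ 2 / 2) := by fun_prop

lemma Efun_hasDerivAt (x : ℝ) : HasDerivAt Efun (Real.exp (-x ^ 2 / 2)) x :=
  intervalIntegral.integral_hasDerivAt_right (contE.intervalIntegrable 0 x)
    (contE.stronglyMeasurableAtFilter _ _) contE.continuousAt

lemma Efun_odd (x : ℝ) : Efun (-x) = -Efun x := by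
  unfold Efun
  rw [intervalIntegral.integral_symm, show (0:ℝ) = -(0:ℝ) by ring]
  rw [← intervalIntegral.integral_comp_neg fun u => Real.exp (-u ^ 2 / 2)]
  simp [neg_sq]

lemma gauss_integrableOn {b : ℝ} (hb : 0 < b) (j : ℕ) :
    IntegrableOn (fun r : ℝ => r ^ j * Real.exp (-b * r ^ 2)) (Ioi 0) := by
  have h := integrable_rpow_mul_exp_neg_mul_sq hb
    (s := j) (lt_of_lt_of_le (by norm_num) (Nat.cast_nonneg j))
  have h2 : (fun x : ℝ => x ^ (j:ℝ) * Real.exp (-b * x ^ 2)) = fun x : ℝ => x ^ j * Real.exp (-b * x ^ 2) := by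
    funext x; rw [Real.rpow_natCast]
  rw [h2] at h
  exact h.integrableOn

lemma Efun_tendsto : Tendsto Efun atTop (𝓝 (Real.sqrt (π / 2))) := by
  have hint : IntegrableOn (fun u : ℝ => Real.exp (-u ^ 2 / 2)) (Ioi 0) := by
    have := gauss_integrableOn (by norm_num : (0:ℝ) < 1/2) 0
    simpa [neg_div, mul_comm, div_eq_mul_inv] using this.congr_fun (by
      intro x _; ring_nf) measurableSet_Ioi
  have h := intervalIntegral_tendsto_integral_Ioi 0 hint tendsto_id
  have hval : (∫ u in Ioi (0:ℝ), Real.exp (-u ^ 2 / 2)) = Real.sqrt (π / 2) := by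
    have h1 : (∫ u in Ioi (0:ℝ), Real.exp (-(1/2) * u ^ 2)) = Real.sqrt (π / (1/2)) / 2 :=
      integral_gaussian_Ioi (1/2)
    have h2 : (∫ u in Ioi (0:ℝ), Real.exp (-u ^ 2 / 2)) = ∫ u in Ioi (0:ℝ), Real.exp (-(1/2) * u ^ 2) := by
      congr 1; funext u; ring_nf
    rw [h2, h1]
    rw [show π / (1/2 : ℝ) = 2^2 * (π/2) by ring, Real.sqrt_mul (by positivity), Real.sqrt_sq (by norm_num)]
    ring
  rw [← hval]; exact h

lemma gauss_decay (A s : ℝ) (hs : 0 < s) (j : ℕ) :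
    Tendsto (fun r : ℝ => r ^ j * Real.exp (-((r - A) / s) ^ 2 / 2)) atTop (𝓝 0) := by
  apply squeeze_zero' (g := fun r : ℝ => r ^ j * Real.exp (-r))
  · filter_upwards [eventually_ge_atTop (0:ℝ)] with r hr
    positivity
  · filter_upwards [eventually_ge_atTop (2 * (|A| + s ^ 2) + 1)] with r hr
    have hr0 : 0 ≤ r := by nlinarith [abs_nonneg A, sq_nonneg s]
    have hA : A ≤ |A| := le_abs_self A
    have hkey : -((r - A) / s) ^ 2 / 2 ≤ -r := by
      rw [neg_div, neg_le_neg_iff, div_pow, div_div, le_div_iff₀ (by positivity)]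
      nlinarith [sq_nonneg (r - A), abs_nonneg A]
    exact mul_le_mul_of_nonneg_left (Real.exp_le_exp.2 hkey) (by positivity)
  · exact tendsto_pow_mul_exp_neg_atTop_nhds_zero j

lemma sinh_le_exp'' {x : ℝ} : Real.sinh x ≤ Real.exp x := by
  rw [Real.sinh_eq]; nlinarith [Real.exp_pos (-x), Real.exp_pos x]

lemma sinh_weight_integrable (κ t : ℝ) (hκ : 0 < κ) (ht : 0 < t) (j : ℕ) :
    IntegrableOn (fun r : ℝ => Real.exp (-r ^ 2 / (2 * t)) * r ^ j * Real.sinh (κ * r)) (Ioi 0) := by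
  apply Integrable.mono' (g := fun r : ℝ =>
      Real.exp (κ ^ 2 * t) * (r ^ j * Real.exp (-(1 / (4 * t)) * r ^ 2)))
  · exact (gauss_integrableOn (by positivity) j).const_mul _
  · exact (by fun_prop :
      Continuous fun r : ℝ => Real.exp (-r ^ 2 / (2 * t)) * r ^ j * Real.sinh (κ * r)).aestronglyMeasurable.restrict
  · filter_upwards [ae_restrict_mem measurableSet_Ioi] with r hr
    have hr0 : 0 < r := hr
    rw [Real.norm_eq_abs, abs_of_nonneg (mul_nonneg (by positivity) (Real.sinh_pos_iff.2 (by positivity)).le)]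
    have h2 : Real.exp (-r ^ 2 / (2 * t)) * Real.exp (κ * r) ≤
        Real.exp (κ ^ 2 * t) * Real.exp (-(1 / (4 * t)) * r ^ 2) := by
      rw [← Real.exp_add, ← Real.exp_add]
      apply Real.exp_le_exp.2
      have hid : κ ^ 2 * t + -(1 / (4 * t)) * r ^ 2 - (-r ^ 2 / (2 * t) + κ * r)
          = (2 * κ * t - r) ^ 2 / (4 * t) := by field_simp; ring
      nlinarith [sq_nonneg (2 * κ * t - r), div_nonneg (sq_nonneg (2 * κ * t - r)) (by positivity : (0:ℝ) ≤ 4 * t)]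
    calc Real.exp (-r ^ 2 / (2 * t)) * r ^ j * Real.sinh (κ * r)
        ≤ Real.exp (-r ^ 2 / (2 * t)) * r ^ j * Real.exp (κ * r) := by
          apply mul_le_mul_of_nonneg_left sinh_le_exp'' (by positivity)
      _ = Real.exp (-r ^ 2 / (2 * t)) * Real.exp (κ * r) * r ^ j := by ring
      _ ≤ Real.exp (κ ^ 2 * t) * Real.exp (-(1 / (4 * t)) * r ^ 2) * r ^ j :=
          mul_le_mul_of_nonneg_right h2 (by positivity)
      _ = Real.exp (κ ^ 2 * t) * (r ^ j * Real.exp (-(1 / (4 * t)) * r ^ 2)) := by ring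

lemma cosh_le_exp {x : ℝ} (hx : 0 ≤ x) : Real.cosh x ≤ Real.exp x := by
  rw [Real.cosh_eq]
  have := Real.exp_le_exp.2 (by linarith : -x ≤ x)
  linarith

lemma log_sinh_nonneg {x : ℝ} (hx : 0 < x) : 0 ≤ Real.log (Real.sinh x / x) :=
  Real.log_nonneg ((one_le_div hx).2 (Real.self_lt_sinh_iff.2 hx).le)

lemma sinh_lt_mul_cosh' {x : ℝ} (hx : 0 < x) : Real.sinh x < x * Real.cosh x := by
  have key : StrictMonoOn (fun y : ℝ => y * Real.cosh y - Real.sinh y) (Set.Ici 0) := by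
    apply strictMonoOn_of_deriv_pos (convex_Ici 0)
    · fun_prop
    · intro y hy
      rw [interior_Ici] at hy
      have hd : HasDerivAt (fun y : ℝ => y * Real.cosh y - Real.sinh y) (y * Real.sinh y) y := by
        have := ((hasDerivAt_id y).mul (Real.hasDerivAt_cosh y)).sub (Real.hasDerivAt_sinh y)
        refine this.congr_deriv ?_
        simp only [id_eq]; ring
      rw [hd.deriv]
      exact mul_pos hy (Real.sinh_pos_iff.2 hy)
  have := key (self_mem_Ici) (le_of_lt hx : (0:ℝ) ≤ x) hx
  simp only [Real.sinh_zero, Real.cosh_zero] at this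
  linarith

lemma log_sinh_le {x : ℝ} (hx : 0 < x) : Real.log (Real.sinh x / x) ≤ x := by
  have h1 : Real.sinh x / x ≤ Real.exp x := by
    rw [div_le_iff₀ hx]
    calc Real.sinh x ≤ x * Real.cosh x := (sinh_lt_mul_cosh' hx).le
      _ ≤ x * Real.exp x := by nlinarith [cosh_le_exp hx.le]
      _ = Real.exp x * x := by ring
  calc Real.log (Real.sinh x / x) ≤ Real.log (Real.exp x) :=
        Real.log_le_log (by positivity) h1
    _ = x := Real.log_exp x

lemma log_weight_integrable (κ t : ℝ) (hκ : 0 < κ) (ht : 0 < t) :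
    IntegrableOn (fun r : ℝ => Real.exp (-r ^ 2 / (2 * t)) * r ^ 3 * Real.sinh (κ * r) *
      Real.log (Real.sinh (κ * r) / (κ * r))) (Ioi 0) := by
  apply Integrable.mono' (g := fun r : ℝ =>
      κ * (Real.exp (-r ^ 2 / (2 * t)) * r ^ 4 * Real.sinh (κ * r)))
  · exact (sinh_weight_integrable κ t hκ ht 4).const_mul κ
  · apply ContinuousOn.aestronglyMeasurable _ measurableSet_Ioi
    apply ContinuousOn.mul
    · fun_prop
    · apply ContinuousOn.log
      · exact ((Real.continuous_sinh.comp (continuous_const.mul continuous_id)).continuousOn.div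
          ((continuous_const.mul continuous_id).continuousOn) (fun r hr => by
            have hr0 : 0 < r := hr; positivity))
      intro r hr
      have hr0 : 0 < r := hr
      have : 0 < Real.sinh (κ * r) / (κ * r) := by
        apply div_pos (Real.sinh_pos_iff.2 (by positivity)) (by positivity)
      exact ne_of_gt this
  · filter_upwards [ae_restrict_mem measurableSet_Ioi] with r hr
    have hr0 : 0 < r := hr
    have hx : 0 < κ * r := by positivity
    have hsh : 0 ≤ Real.sinh (κ * r) := (Real.sinh_pos_iff.2 hx).le
    rw [Real.norm_eq_abs, abs_of_nonneg (by
      have := log_sinh_nonneg hx; positivity)]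
    calc Real.exp (-r ^ 2 / (2 * t)) * r ^ 3 * Real.sinh (κ * r) * Real.log (Real.sinh (κ * r) / (κ * r))
        ≤ Real.exp (-r ^ 2 / (2 * t)) * r ^ 3 * Real.sinh (κ * r) * (κ * r) := by
          apply mul_le_mul_of_nonneg_left (log_sinh_le hx) (by positivity)
      _ = κ * (Real.exp (-r ^ 2 / (2 * t)) * r ^ 4 * Real.sinh (κ * r)) := by ring

lemma log_sinh_lt {x : ℝ} (hx : 0 < x) :
    Real.log (Real.sinh x / x) < x - Real.log (1 + x) := by
  have hsinh : 0 < Real.sinh x := Real.sinh_pos_iff.2 hx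
  have h1x : 0 < 1 + x := by linarith
  have h1 : Real.sinh x / x < Real.exp x / (1 + x) := by
    rw [div_lt_div_iff₀ hx h1x]
    have h2 := sinh_lt_mul_cosh' hx
    rw [Real.cosh_eq, Real.sinh_eq] at *
    nlinarith [Real.exp_pos (-x)]
  have h3 := Real.log_lt_log (by positivity) h1
  rwa [Real.log_div (Real.exp_ne_zero x) (ne_of_gt h1x), Real.log_exp] at h3

lemma master {κ r b M : ℝ} (hκ : 0 < κ) (hr : 0 < r) (hb : 0 < b)
    (hM : M = 1 / (1 + κ * b)) :
    r * Real.log (Real.sinh (κ * r) / (κ * r))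
      < κ * r ^ 2 + (Real.log M - 1) * r + b + M * (r - b) := by
  have hx : 0 < κ * r := by positivity
  have h1κb : 0 < 1 + κ * b := by positivity
  have h1κr : 0 < 1 + κ * r := by positivity
  have hMpos : 0 < M := by rw [hM]; positivity
  have h1 := log_sinh_lt hx
  have h2 : -Real.log (1 + κ * r) ≤ Real.log M + (1 + κ * r)⁻¹ / M - 1 := by
    have hy : (0:ℝ) < (1 + κ * r)⁻¹ := by positivity
    have hls := Real.log_le_sub_one_of_pos (show 0 < (1 + κ * r)⁻¹ / M by positivity)
    rw [Real.log_div (ne_of_gt hy) (ne_of_gt hMpos), Real.log_inv] at hls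
    linarith
  have h3 : (1 + κ * r)⁻¹ * r ≤ b * M + M ^ 2 * (r - b) := by
    have hMeq : b * M + M ^ 2 * (r - b) = (b * (1 + κ * b) + (r - b)) / (1 + κ * b) ^ 2 := by
      rw [hM]; field_simp
    rw [inv_mul_eq_div, hMeq, div_le_div_iff₀ h1κr (by positivity)]
    nlinarith [mul_nonneg hκ.le (sq_nonneg (r - b))]
  have e1 : r * Real.log (Real.sinh (κ * r) / (κ * r))
      < r * (κ * r) - r * Real.log (1 + κ * r) := by
    nlinarith [mul_lt_mul_of_pos_left h1 hr]
  have e2 : -(r * Real.log (1 + κ * r)) ≤ r * Real.log M + r * ((1 + κ * r)⁻¹ / M) - r := by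
    nlinarith [mul_le_mul_of_nonneg_left h2 hr.le]
  have e3 : r * ((1 + κ * r)⁻¹ / M) ≤ b + M * (r - b) := by
    have h4 : ((1 + κ * r)⁻¹ * r) / M ≤ (b * M + M ^ 2 * (r - b)) / M := by gcongr
    have h5 : (b * M + M ^ 2 * (r - b)) / M = b + M * (r - b) := by field_simp
    have h6 : r * ((1 + κ * r)⁻¹ / M) = ((1 + κ * r)⁻¹ * r) / M := by ring
    linarith [h4, h5.symm.le, h6.le]
  nlinarith [e1, e2, e3]

lemma hlin {s : ℝ} (B r : ℝ) : HasDerivAt (fun r : ℝ => (r - B) / s) (1 / s) r :=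
  ((hasDerivAt_id r).sub_const B).div_const s

lemma hE {s : ℝ} (B r : ℝ) :
    HasDerivAt (fun r : ℝ => Efun ((r - B) / s)) (Real.exp (-((r - B) / s) ^ 2 / 2) * (1 / s)) r :=
  (Efun_hasDerivAt _).comp r (hlin B r)

lemma hX {s : ℝ} (B r : ℝ) :
    HasDerivAt (fun r : ℝ => Real.exp (-((r - B) / s) ^ 2 / 2))
      (Real.exp (-((r - B) / s) ^ 2 / 2) * (-((r - B) / s) * (1 / s))) r := by
  have h1 : HasDerivAt (fun r : ℝ => -((r - B) / s) ^ 2 / 2) (-((r - B) / s) * (1 / s)) r := by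
    have := (((hlin (s := s) B r).pow 2).neg).div_const 2
    refine this.congr_deriv ?_
    simp [pow_one]
    ring
  exact (Real.hasDerivAt_exp _).comp r h1

lemma hlin_top {s : ℝ} (hs : 0 < s) (B : ℝ) : Tendsto (fun r : ℝ => (r - B) / s) atTop atTop := by
  apply Tendsto.atTop_div_const hs
  simpa [sub_eq_add_neg] using tendsto_atTop_add_const_right atTop (-B) tendsto_id

lemma hE_top {s : ℝ} (hs : 0 < s) (B : ℝ) :
    Tendsto (fun r : ℝ => Efun ((r - B) / s)) atTop (𝓝 (Real.sqrt (π / 2))) :=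
  Efun_tendsto.comp (hlin_top hs B)

lemma J2_eq {κ s : ℝ} (hκ : 0 < κ) (hs : 0 < s) :
    ∫ r in Ioi (0:ℝ), Real.exp (-r ^ 2 / (2 * s ^ 2)) * r ^ 2 * Real.sinh (κ * r)
      = κ * s ^ 4 + s ^ 3 * (κ ^ 2 * s ^ 2 + 1) * Real.exp (κ ^ 2 * s ^ 2 / 2) * Efun (κ * s) := by
  have hP := Real.exp_ne_zero (κ ^ 2 * s ^ 2 / 2)
  set A : ℝ := κ * s ^ 2 with hA
  set W : ℝ := Real.exp (κ ^ 2 * s ^ 2 / 2) / 2 with hW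
  set C2 : ℝ := s ^ 3 * (κ ^ 2 * s ^ 2 + 1) with hC2
  set G : ℝ → ℝ := fun r =>
    W * (C2 * (Efun ((r - A) / s) - Efun ((r - -A) / s))
      - (s ^ 2 * r + κ * s ^ 4) * Real.exp (-((r - A) / s) ^ 2 / 2)
      + (s ^ 2 * r - κ * s ^ 4) * Real.exp (-((r - -A) / s) ^ 2 / 2)) with hGdef
  have hG : ∀ r ∈ Ici (0:ℝ), HasDerivAt G
      (Real.exp (-r ^ 2 / (2 * s ^ 2)) * r ^ 2 * Real.sinh (κ * r)) r := by
    intro r _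
    have h := (((((hE (s := s) A r).sub (hE (s := s) (-A) r)).const_mul C2).sub
        ((((hasDerivAt_id r).const_mul (s ^ 2)).add_const (κ * s ^ 4)).mul (hX (s := s) A r))).add
        ((((hasDerivAt_id r).const_mul (s ^ 2)).sub_const (κ * s ^ 4)).mul (hX (s := s) (-A) r))).const_mul W
    refine h.congr_deriv ?_
    simp only [id_eq]
    have e1 : Real.exp (-((r - A) / s) ^ 2 / 2)
        = Real.exp (-r ^ 2 / (2 * s ^ 2)) * Real.exp (κ * r) * (Real.exp (κ ^ 2 * s ^ 2 / 2))⁻¹ := by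
      rw [← Real.exp_neg, ← Real.exp_add, ← Real.exp_add]
      congr 1
      rw [hA]; field_simp; ring
    have e2 : Real.exp (-((r - -A) / s) ^ 2 / 2)
        = Real.exp (-r ^ 2 / (2 * s ^ 2)) * (Real.exp (κ * r))⁻¹ * (Real.exp (κ ^ 2 * s ^ 2 / 2))⁻¹ := by
      rw [← Real.exp_neg, ← Real.exp_neg, ← Real.exp_add, ← Real.exp_add]
      congr 1
      rw [hA]; field_simp; ring
    rw [Real.sinh_eq, Real.exp_neg, e1, e2, hW, hC2, hA]
    field_simp
    ring
  have htop : Tendsto G atTop (𝓝 0) := by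
    have T1 : Tendsto (fun r : ℝ => Efun ((r - A) / s) - Efun ((r - -A) / s)) atTop
        (𝓝 (Real.sqrt (π/2) - Real.sqrt (π/2))) := (hE_top hs A).sub (hE_top hs (-A))
    have T2 : Tendsto (fun r : ℝ => (s ^ 2 * r + κ * s ^ 4) * Real.exp (-((r - A) / s) ^ 2 / 2))
        atTop (𝓝 0) := by
      have := ((gauss_decay A s hs 1).const_mul (s ^ 2)).add ((gauss_decay A s hs 0).const_mul (κ * s ^ 4))
      simp only [mul_zero, add_zero] at this
      refine this.congr (fun r => by ring)
    have T3 : Tendsto (fun r : ℝ => (s ^ 2 * r - κ * s ^ 4) * Real.exp (-((r - -A) / s) ^ 2 / 2))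
        atTop (𝓝 0) := by
      have := ((gauss_decay (-A) s hs 1).const_mul (s ^ 2)).sub ((gauss_decay (-A) s hs 0).const_mul (κ * s ^ 4))
      simp only [mul_zero, sub_zero] at this
      refine this.congr (fun r => by ring)
    have T := (((T1.const_mul C2).sub T2).add T3).const_mul W
    rw [show W * (C2 * (Real.sqrt (π/2) - Real.sqrt (π/2)) - 0 + 0) = 0 by ring] at T
    exact T
  have hint := sinh_weight_integrable κ (s ^ 2) hκ (by positivity) 2
  have hFTC := integral_Ioi_of_hasDerivAt_of_tendsto
    (hG 0 self_mem_Ici).continuousAt.continuousWithinAt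
    (fun r hr => hG r (Ioi_subset_Ici_self hr)) hint htop
  rw [hFTC]
  have e0 : ((0:ℝ) - A) / s = -(κ * s) := by rw [hA]; field_simp; ring
  have e0' : ((0:ℝ) - -A) / s = κ * s := by rw [hA]; field_simp; ring
  have eexp : Real.exp (-(κ * s) ^ 2 / 2) = (Real.exp (κ ^ 2 * s ^ 2 / 2))⁻¹ := by
    rw [← Real.exp_neg]; congr 1; ring
  rw [hGdef]
  simp only [e0, e0', Efun_odd, neg_sq, eexp, neg_neg]
  rw [hW]
  have : Real.exp (-(κ * s) ^ 2 / 2) = (Real.exp (κ ^ 2 * s ^ 2 / 2))⁻¹ := eexp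
  field_simp
  ring

lemma J3_eq {κ s : ℝ} (hκ : 0 < κ) (hs : 0 < s) :
    ∫ r in Ioi (0:ℝ), Real.exp (-r ^ 2 / (2 * s ^ 2)) * r ^ 3 * Real.sinh (κ * r)
      = Real.sqrt (π / 2) * κ * s ^ 5 * (κ ^ 2 * s ^ 2 + 3) * Real.exp (κ ^ 2 * s ^ 2 / 2) := by
  have hP := Real.exp_ne_zero (κ ^ 2 * s ^ 2 / 2)
  set A : ℝ := κ * s ^ 2 with hA
  set W : ℝ := Real.exp (κ ^ 2 * s ^ 2 / 2) / 2 with hW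
  set C3 : ℝ := κ * s ^ 5 * (κ ^ 2 * s ^ 2 + 3) with hC3
  set G : ℝ → ℝ := fun r =>
    W * (C3 * (Efun ((r - A) / s) + Efun ((r - -A) / s))
      - (s ^ 2 * (r ^ 2 + A * r + A ^ 2) + 2 * s ^ 4) * Real.exp (-((r - A) / s) ^ 2 / 2)
      + (s ^ 2 * (r ^ 2 - A * r + A ^ 2) + 2 * s ^ 4) * Real.exp (-((r - -A) / s) ^ 2 / 2)) with hGdef
  have hG : ∀ r ∈ Ici (0:ℝ), HasDerivAt G
      (Real.exp (-r ^ 2 / (2 * s ^ 2)) * r ^ 3 * Real.sinh (κ * r)) r := by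
    intro r _
    have hq1 : HasDerivAt (fun r : ℝ => s ^ 2 * (r ^ 2 + A * r + A ^ 2) + 2 * s ^ 4)
        (s ^ 2 * (2 * r + A)) r := by
      have := (((((hasDerivAt_id r).pow 2).add ((hasDerivAt_id r).const_mul A)).add_const (A^2)).const_mul (s^2)).add_const (2*s^4)
      refine this.congr_deriv ?_
      simp only [id_eq, pow_one]; push_cast; ring
    have hq2 : HasDerivAt (fun r : ℝ => s ^ 2 * (r ^ 2 - A * r + A ^ 2) + 2 * s ^ 4)
        (s ^ 2 * (2 * r - A)) r := by
      have := (((((hasDerivAt_id r).pow 2).sub ((hasDerivAt_id r).const_mul A)).add_const (A^2)).const_mul (s^2)).add_const (2*s^4)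
      refine this.congr_deriv ?_
      simp only [id_eq, pow_one]; push_cast; ring
    have h := (((((hE (s := s) A r).add (hE (s := s) (-A) r)).const_mul C3).sub
        (hq1.mul (hX (s := s) A r))).add (hq2.mul (hX (s := s) (-A) r))).const_mul W
    refine h.congr_deriv ?_
    have e1 : Real.exp (-((r - A) / s) ^ 2 / 2)
        = Real.exp (-r ^ 2 / (2 * s ^ 2)) * Real.exp (κ * r) * (Real.exp (κ ^ 2 * s ^ 2 / 2))⁻¹ := by
      rw [← Real.exp_neg, ← Real.exp_add, ← Real.exp_add]
      congr 1
      rw [hA]; field_simp; ring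
    have e2 : Real.exp (-((r - -A) / s) ^ 2 / 2)
        = Real.exp (-r ^ 2 / (2 * s ^ 2)) * (Real.exp (κ * r))⁻¹ * (Real.exp (κ ^ 2 * s ^ 2 / 2))⁻¹ := by
      rw [← Real.exp_neg, ← Real.exp_neg, ← Real.exp_add, ← Real.exp_add]
      congr 1
      rw [hA]; field_simp; ring
    rw [Real.sinh_eq, Real.exp_neg, e1, e2, hW, hC3, hA]
    field_simp
    ring
  have htop : Tendsto G atTop
      (𝓝 (Real.exp (κ ^ 2 * s ^ 2 / 2) * (Real.sqrt (π / 2) * (κ * s ^ 5 * (κ ^ 2 * s ^ 2 + 3))))) := by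
    have T1 : Tendsto (fun r : ℝ => Efun ((r - A) / s) + Efun ((r - -A) / s)) atTop
        (𝓝 (Real.sqrt (π/2) + Real.sqrt (π/2))) := (hE_top hs A).add (hE_top hs (-A))
    have T2 : Tendsto (fun r : ℝ => (s ^ 2 * (r ^ 2 + A * r + A ^ 2) + 2 * s ^ 4) *
        Real.exp (-((r - A) / s) ^ 2 / 2)) atTop (𝓝 0) := by
      have := (((gauss_decay A s hs 2).const_mul (s ^ 2)).add
        ((gauss_decay A s hs 1).const_mul (s ^ 2 * A))).add
        ((gauss_decay A s hs 0).const_mul (s ^ 2 * A ^ 2 + 2 * s ^ 4))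
      simp only [mul_zero, add_zero] at this
      refine this.congr (fun r => by ring)
    have T3 : Tendsto (fun r : ℝ => (s ^ 2 * (r ^ 2 - A * r + A ^ 2) + 2 * s ^ 4) *
        Real.exp (-((r - -A) / s) ^ 2 / 2)) atTop (𝓝 0) := by
      have := (((gauss_decay (-A) s hs 2).const_mul (s ^ 2)).sub
        ((gauss_decay (-A) s hs 1).const_mul (s ^ 2 * A))).add
        ((gauss_decay (-A) s hs 0).const_mul (s ^ 2 * A ^ 2 + 2 * s ^ 4))
      simp only [mul_zero, add_zero, sub_zero] at this
      refine this.congr (fun r => by ring)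
    have T := (((T1.const_mul C3).sub T2).add T3).const_mul W
    rw [show W * (C3 * (Real.sqrt (π/2) + Real.sqrt (π/2)) - 0 + 0)
      = Real.exp (κ ^ 2 * s ^ 2 / 2) * (Real.sqrt (π / 2) * (κ * s ^ 5 * (κ ^ 2 * s ^ 2 + 3))) by
        rw [hW, hC3]; ring] at T
    exact T
  have hint := sinh_weight_integrable κ (s ^ 2) hκ (by positivity) 3
  have hFTC := integral_Ioi_of_hasDerivAt_of_tendsto
    (hG 0 self_mem_Ici).continuousAt.continuousWithinAt
    (fun r hr => hG r (Ioi_subset_Ici_self hr)) hint htop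
  rw [hFTC]
  have e0 : ((0:ℝ) - A) / s = -(κ * s) := by rw [hA]; field_simp; ring
  have e0' : ((0:ℝ) - -A) / s = κ * s := by rw [hA]; field_simp; ring
  rw [hGdef]
  simp only [e0, e0', Efun_odd, neg_sq, neg_neg]
  ring

lemma J4_eq {κ s : ℝ} (hκ : 0 < κ) (hs : 0 < s) :
    ∫ r in Ioi (0:ℝ), Real.exp (-r ^ 2 / (2 * s ^ 2)) * r ^ 4 * Real.sinh (κ * r)
      = κ * s ^ 6 * (κ ^ 2 * s ^ 2 + 5)
        + s ^ 5 * (κ ^ 4 * s ^ 4 + 6 * κ ^ 2 * s ^ 2 + 3) * Real.exp (κ ^ 2 * s ^ 2 / 2) * Efun (κ * s) := by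
  have hP := Real.exp_ne_zero (κ ^ 2 * s ^ 2 / 2)
  set A : ℝ := κ * s ^ 2 with hA
  set W : ℝ := Real.exp (κ ^ 2 * s ^ 2 / 2) / 2 with hW
  set C4 : ℝ := s ^ 5 * (κ ^ 4 * s ^ 4 + 6 * κ ^ 2 * s ^ 2 + 3) with hC4
  set G : ℝ → ℝ := fun r =>
    W * (C4 * (Efun ((r - A) / s) - Efun ((r - -A) / s))
      - (s ^ 2 * (r ^ 3 + A * r ^ 2 + A ^ 2 * r + A ^ 3) + s ^ 4 * (3 * r + 5 * A)) *
          Real.exp (-((r - A) / s) ^ 2 / 2)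
      + (s ^ 2 * (r ^ 3 - A * r ^ 2 + A ^ 2 * r - A ^ 3) + s ^ 4 * (3 * r - 5 * A)) *
          Real.exp (-((r - -A) / s) ^ 2 / 2)) with hGdef
  have hG : ∀ r ∈ Ici (0:ℝ), HasDerivAt G
      (Real.exp (-r ^ 2 / (2 * s ^ 2)) * r ^ 4 * Real.sinh (κ * r)) r := by
    intro r _
    have hq1 : HasDerivAt (fun r : ℝ =>
        s ^ 2 * (r ^ 3 + A * r ^ 2 + A ^ 2 * r + A ^ 3) + s ^ 4 * (3 * r + 5 * A))
        (s ^ 2 * (3 * r ^ 2 + 2 * A * r + A ^ 2) + 3 * s ^ 4) r := by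
      have := (((((((hasDerivAt_id r).pow 3).add (((hasDerivAt_id r).pow 2).const_mul A)).add
        ((hasDerivAt_id r).const_mul (A ^ 2))).add_const (A ^ 3)).const_mul (s ^ 2)).add
        ((((hasDerivAt_id r).const_mul (3:ℝ)).add_const (5 * A)).const_mul (s ^ 4)))
      refine this.congr_deriv ?_
      simp only [id_eq, pow_one]; push_cast; ring
    have hq2 : HasDerivAt (fun r : ℝ =>
        s ^ 2 * (r ^ 3 - A * r ^ 2 + A ^ 2 * r - A ^ 3) + s ^ 4 * (3 * r - 5 * A))
        (s ^ 2 * (3 * r ^ 2 - 2 * A * r + A ^ 2) + 3 * s ^ 4) r := by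
      have := (((((((hasDerivAt_id r).pow 3).sub (((hasDerivAt_id r).pow 2).const_mul A)).add
        ((hasDerivAt_id r).const_mul (A ^ 2))).sub_const (A ^ 3)).const_mul (s ^ 2)).add
        ((((hasDerivAt_id r).const_mul (3:ℝ)).sub_const (5 * A)).const_mul (s ^ 4)))
      refine this.congr_deriv ?_
      simp only [id_eq, pow_one]; push_cast; ring
    have h := (((((hE (s := s) A r).sub (hE (s := s) (-A) r)).const_mul C4).sub
        (hq1.mul (hX (s := s) A r))).add (hq2.mul (hX (s := s) (-A) r))).const_mul W
    refine h.congr_deriv ?_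
    have e1 : Real.exp (-((r - A) / s) ^ 2 / 2)
        = Real.exp (-r ^ 2 / (2 * s ^ 2)) * Real.exp (κ * r) * (Real.exp (κ ^ 2 * s ^ 2 / 2))⁻¹ := by
      rw [← Real.exp_neg, ← Real.exp_add, ← Real.exp_add]
      congr 1
      rw [hA]; field_simp; ring
    have e2 : Real.exp (-((r - -A) / s) ^ 2 / 2)
        = Real.exp (-r ^ 2 / (2 * s ^ 2)) * (Real.exp (κ * r))⁻¹ * (Real.exp (κ ^ 2 * s ^ 2 / 2))⁻¹ := by
      rw [← Real.exp_neg, ← Real.exp_neg, ← Real.exp_add, ← Real.exp_add]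
      congr 1
      rw [hA]; field_simp; ring
    rw [Real.sinh_eq, Real.exp_neg, e1, e2, hW, hC4, hA]
    field_simp
    ring
  have htop : Tendsto G atTop (𝓝 0) := by
    have T1 : Tendsto (fun r : ℝ => Efun ((r - A) / s) - Efun ((r - -A) / s)) atTop
        (𝓝 (Real.sqrt (π/2) - Real.sqrt (π/2))) := (hE_top hs A).sub (hE_top hs (-A))
    have T2 : Tendsto (fun r : ℝ =>
        (s ^ 2 * (r ^ 3 + A * r ^ 2 + A ^ 2 * r + A ^ 3) + s ^ 4 * (3 * r + 5 * A)) *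
          Real.exp (-((r - A) / s) ^ 2 / 2)) atTop (𝓝 0) := by
      have := ((((gauss_decay A s hs 3).const_mul (s ^ 2)).add
        ((gauss_decay A s hs 2).const_mul (s ^ 2 * A))).add
        ((gauss_decay A s hs 1).const_mul (s ^ 2 * A ^ 2 + 3 * s ^ 4))).add
        ((gauss_decay A s hs 0).const_mul (s ^ 2 * A ^ 3 + 5 * A * s ^ 4))
      simp only [mul_zero, add_zero] at this
      refine this.congr (fun r => by ring)
    have T3 : Tendsto (fun r : ℝ =>
        (s ^ 2 * (r ^ 3 - A * r ^ 2 + A ^ 2 * r - A ^ 3) + s ^ 4 * (3 * r - 5 * A)) *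
          Real.exp (-((r - -A) / s) ^ 2 / 2)) atTop (𝓝 0) := by
      have := ((((gauss_decay (-A) s hs 3).const_mul (s ^ 2)).sub
        ((gauss_decay (-A) s hs 2).const_mul (s ^ 2 * A))).add
        ((gauss_decay (-A) s hs 1).const_mul (s ^ 2 * A ^ 2 + 3 * s ^ 4))).sub
        ((gauss_decay (-A) s hs 0).const_mul (s ^ 2 * A ^ 3 + 5 * A * s ^ 4))
      simp only [mul_zero, add_zero, sub_zero] at this
      refine this.congr (fun r => by ring)
    have T := (((T1.const_mul C4).sub T2).add T3).const_mul W
    rw [show W * (C4 * (Real.sqrt (π/2) - Real.sqrt (π/2)) - 0 + 0) = 0 by ring] at T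
    exact T
  have hint := sinh_weight_integrable κ (s ^ 2) hκ (by positivity) 4
  have hFTC := integral_Ioi_of_hasDerivAt_of_tendsto
    (hG 0 self_mem_Ici).continuousAt.continuousWithinAt
    (fun r hr => hG r (Ioi_subset_Ici_self hr)) hint htop
  rw [hFTC]
  have e0 : ((0:ℝ) - A) / s = -(κ * s) := by rw [hA]; field_simp; ring
  have e0' : ((0:ℝ) - -A) / s = κ * s := by rw [hA]; field_simp; ring
  have eexp : Real.exp (-(κ * s) ^ 2 / 2) = (Real.exp (κ ^ 2 * s ^ 2 / 2))⁻¹ := by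
    rw [← Real.exp_neg]; congr 1; ring
  rw [hGdef]
  simp only [e0, e0', Efun_odd, neg_sq, eexp, neg_neg]
  rw [hW]
  field_simp
  ring

/-- Upper bound on `D(t) = η'(t)` for `κ > 0` and `t > 0`. -/
theorem eta_deriv_upper_bound (κ : ℝ) (hκ : 0 < κ) (t : ℝ) (ht : 0 < t) :
    etaDeriv κ t <
      (1 / 2) * κ ^ 2 * t * (κ ^ 2 * t + 5) +
        (1 / 2) * κ * t ^ ((1 : ℝ) / 2) * (κ ^ 4 * t ^ 2 + 6 * κ ^ 2 * t + 3) *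
          Real.exp (κ ^ 2 * t / 2) * alphaFun κ t -
        (1 / 2) * Real.sqrt (π / 2) * κ * t ^ ((1 : ℝ) / 2) * (κ ^ 2 * t + 3) *
          Real.exp (κ ^ 2 * t / 2) *
          Real.log (1 +
            Real.sqrt (π / 2) * (κ ^ 2 * t * (κ ^ 2 * t + 3) * Real.exp (κ ^ 2 * t / 2)) /
              (κ * t ^ ((1 : ℝ) / 2) +
                (κ ^ 2 * t + 1) * Real.exp (κ ^ 2 * t / 2) * alphaFun κ t)) := by
  have hst : 0 < Real.sqrt t := Real.sqrt_pos.2 ht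
  simp only [etaDeriv, alphaFun]
  rw [show t ^ ((1:ℝ)/2) = Real.sqrt t from (Real.sqrt_eq_rpow t).symm]
  set s := Real.sqrt t with hsdef
  have hs : 0 < s := hst
  have hs2 : s ^ 2 = t := Real.sq_sqrt ht.le
  rw [← hs2]
  rw [show (∫ r in (0:ℝ)..(κ * s), Real.exp (-r ^ 2 / 2)) = Efun (κ * s) from rfl]
  have hαpos : 0 < Efun (κ * s) := by
    unfold Efun
    exact intervalIntegral.intervalIntegral_pos_of_pos (contE.intervalIntegrable _ _)
      (fun x => Real.exp_pos _) (by positivity)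
  have hJ2 := J2_eq hκ hs
  have hJ3 := J3_eq hκ hs
  have hJ4 := J4_eq hκ hs
  set J2 : ℝ := κ * s ^ 4 + s ^ 3 * (κ ^ 2 * s ^ 2 + 1) * Real.exp (κ ^ 2 * s ^ 2 / 2) * Efun (κ * s) with hJ2def
  set J3 : ℝ := Real.sqrt (π / 2) * κ * s ^ 5 * (κ ^ 2 * s ^ 2 + 3) * Real.exp (κ ^ 2 * s ^ 2 / 2) with hJ3def
  set J4 : ℝ := κ * s ^ 6 * (κ ^ 2 * s ^ 2 + 5)
    + s ^ 5 * (κ ^ 4 * s ^ 4 + 6 * κ ^ 2 * s ^ 2 + 3) * Real.exp (κ ^ 2 * s ^ 2 / 2) * Efun (κ * s) with hJ4def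
  have hJ2pos : 0 < J2 := by
    have h1 : 0 < κ * s ^ 4 := by positivity
    have h2 : 0 < s ^ 3 * (κ ^ 2 * s ^ 2 + 1) * Real.exp (κ ^ 2 * s ^ 2 / 2) * Efun (κ * s) :=
      mul_pos (by positivity) hαpos
    rw [hJ2def]; linarith
  have hJ3pos : 0 < J3 := by rw [hJ3def]; positivity
  have hJ2J3 : 0 < J2 + κ * J3 := by linarith [mul_pos hκ hJ3pos]
  set b : ℝ := J3 / J2 with hbdef
  set M : ℝ := J2 / (J2 + κ * J3) with hMdef
  have hbpos : 0 < b := div_pos hJ3pos hJ2pos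
  have hM1 : M = 1 / (1 + κ * b) := by
    rw [hMdef, hbdef]
    field_simp
  have hint2 := sinh_weight_integrable κ (s ^ 2) hκ (by positivity) 2
  have hint3 := sinh_weight_integrable κ (s ^ 2) hκ (by positivity) 3
  have hint4 := sinh_weight_integrable κ (s ^ 2) hκ (by positivity) 4
  have hintL := log_weight_integrable κ (s ^ 2) hκ (by positivity)
  set c3 : ℝ := Real.log M - 1 + M with hc3def
  set c2 : ℝ := b - M * b with hc2def
  have hfeq : (fun r : ℝ => Real.exp (-r ^ 2 / (2 * s ^ 2)) * Real.sinh (κ * r) *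
        (κ * r ^ 4 + c3 * r ^ 3 + c2 * r ^ 2))
      = fun r : ℝ => κ * (Real.exp (-r ^ 2 / (2 * s ^ 2)) * r ^ 4 * Real.sinh (κ * r)) +
        (c3 * (Real.exp (-r ^ 2 / (2 * s ^ 2)) * r ^ 3 * Real.sinh (κ * r)) +
         c2 * (Real.exp (-r ^ 2 / (2 * s ^ 2)) * r ^ 2 * Real.sinh (κ * r))) := by
    funext r; ring
  have hi32 : IntegrableOn (fun r : ℝ =>
      c3 * (Real.exp (-r ^ 2 / (2 * s ^ 2)) * r ^ 3 * Real.sinh (κ * r)) +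
      c2 * (Real.exp (-r ^ 2 / (2 * s ^ 2)) * r ^ 2 * Real.sinh (κ * r))) (Ioi 0) :=
    (hint3.const_mul c3).add (hint2.const_mul c2)
  have hintG : IntegrableOn (fun r : ℝ => Real.exp (-r ^ 2 / (2 * s ^ 2)) * Real.sinh (κ * r) *
      (κ * r ^ 4 + c3 * r ^ 3 + c2 * r ^ 2)) (Ioi 0) := by
    rw [hfeq]
    exact (hint4.const_mul κ).add hi32
  have hGval : (∫ r in Ioi (0:ℝ), Real.exp (-r ^ 2 / (2 * s ^ 2)) * Real.sinh (κ * r) *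
      (κ * r ^ 4 + c3 * r ^ 3 + c2 * r ^ 2)) = κ * J4 + c3 * J3 + c2 * J2 := by
    rw [hfeq, integral_add (hint4.const_mul κ) hi32,
      integral_add (hint3.const_mul c3) (hint2.const_mul c2),
      integral_const_mul, integral_const_mul, integral_const_mul, hJ4, hJ3, hJ2]
    ring
  have hptws : ∀ r ∈ Ioi (0:ℝ),
      Real.exp (-r ^ 2 / (2 * s ^ 2)) * r ^ 3 * Real.sinh (κ * r) *
        Real.log (Real.sinh (κ * r) / (κ * r))
      < Real.exp (-r ^ 2 / (2 * s ^ 2)) * Real.sinh (κ * r) *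
        (κ * r ^ 4 + c3 * r ^ 3 + c2 * r ^ 2) := by
    intro r hr
    have hr0 : 0 < r := hr
    have hv : 0 < Real.exp (-r ^ 2 / (2 * s ^ 2)) * r ^ 2 * Real.sinh (κ * r) :=
      mul_pos (by positivity) (Real.sinh_pos_iff.2 (by positivity))
    have hm := master (b := b) (M := M) hκ hr0 hbpos hM1
    calc Real.exp (-r ^ 2 / (2 * s ^ 2)) * r ^ 3 * Real.sinh (κ * r) *
          Real.log (Real.sinh (κ * r) / (κ * r))
        = (Real.exp (-r ^ 2 / (2 * s ^ 2)) * r ^ 2 * Real.sinh (κ * r)) *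
          (r * Real.log (Real.sinh (κ * r) / (κ * r))) := by ring
      _ < (Real.exp (-r ^ 2 / (2 * s ^ 2)) * r ^ 2 * Real.sinh (κ * r)) *
          (κ * r ^ 2 + (Real.log M - 1) * r + b + M * (r - b)) := (mul_lt_mul_iff_right₀ hv).2 hm
      _ = Real.exp (-r ^ 2 / (2 * s ^ 2)) * Real.sinh (κ * r) *
          (κ * r ^ 4 + c3 * r ^ 3 + c2 * r ^ 2) := by rw [hc3def, hc2def]; ring
  have hsub : 0 < ∫ r in Ioi (0:ℝ),
      (Real.exp (-r ^ 2 / (2 * s ^ 2)) * Real.sinh (κ * r) * (κ * r ^ 4 + c3 * r ^ 3 + c2 * r ^ 2)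
       - Real.exp (-r ^ 2 / (2 * s ^ 2)) * r ^ 3 * Real.sinh (κ * r) *
          Real.log (Real.sinh (κ * r) / (κ * r))) := by
    have hdiffInt : IntegrableOn (fun r : ℝ =>
        Real.exp (-r ^ 2 / (2 * s ^ 2)) * Real.sinh (κ * r) * (κ * r ^ 4 + c3 * r ^ 3 + c2 * r ^ 2)
        - Real.exp (-r ^ 2 / (2 * s ^ 2)) * r ^ 3 * Real.sinh (κ * r) *
            Real.log (Real.sinh (κ * r) / (κ * r))) (Ioi 0) := hintG.sub hintL
    rw [setIntegral_pos_iff_support_of_nonneg_ae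
      (by filter_upwards [ae_restrict_mem measurableSet_Ioi] with r hr
          exact sub_nonneg.2 (hptws r hr).le)
      hdiffInt]
    refine lt_of_lt_of_le ?_ (measure_mono
      (fun r hr => ⟨ne_of_gt (sub_pos.2 (hptws r hr)), hr⟩))
    rw [Real.volume_Ioi]
    exact ENNReal.zero_lt_top
  have hL : (∫ r in Ioi (0:ℝ), Real.exp (-r ^ 2 / (2 * s ^ 2)) * r ^ 3 * Real.sinh (κ * r) *
      Real.log (Real.sinh (κ * r) / (κ * r))) < κ * J4 + c3 * J3 + c2 * J2 := by
    rw [← hGval]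
    have hdiff := integral_sub hintG hintL
    linarith [hsub, hdiff.symm.le, hdiff.le]
  have hbJ2 : b * J2 = J3 := by rw [hbdef]; field_simp
  have hcomb : κ * J4 + c3 * J3 + c2 * J2 = κ * J4 + J3 * Real.log M := by
    rw [hc3def, hc2def]; linear_combination (1 - M) * hbJ2
  have hlogM : Real.log M = -Real.log ((J2 + κ * J3) / J2) := by
    rw [hMdef, ← Real.log_inv, inv_div]
  have hJ2pos' : 0 < κ * s ^ 4 + s ^ 3 * (κ ^ 2 * s ^ 2 + 1) * Real.exp (κ ^ 2 * s ^ 2 / 2) * Efun (κ * s) := by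
    rw [← hJ2def]; exact hJ2pos
  have hXden : (0:ℝ) < κ * s + (κ ^ 2 * s ^ 2 + 1) * Real.exp (κ ^ 2 * s ^ 2 / 2) * Efun (κ * s) := by
    have h1 := mul_pos (show (0:ℝ) < (κ ^ 2 * s ^ 2 + 1) * Real.exp (κ ^ 2 * s ^ 2 / 2) by positivity) hαpos
    linarith [h1, mul_pos hκ hs]
  have hXeq : 1 + Real.sqrt (π / 2) * (κ ^ 2 * s ^ 2 * (κ ^ 2 * s ^ 2 + 3) * Real.exp (κ ^ 2 * s ^ 2 / 2)) /
      (κ * s + (κ ^ 2 * s ^ 2 + 1) * Real.exp (κ ^ 2 * s ^ 2 / 2) * Efun (κ * s))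
      = (J2 + κ * J3) / J2 := by
    have e : Real.sqrt (π / 2) * (κ ^ 2 * s ^ 2 * (κ ^ 2 * s ^ 2 + 3) * Real.exp (κ ^ 2 * s ^ 2 / 2)) /
        (κ * s + (κ ^ 2 * s ^ 2 + 1) * Real.exp (κ ^ 2 * s ^ 2 / 2) * Efun (κ * s)) = κ * J3 / J2 := by
      rw [hJ3def, hJ2def, div_eq_div_iff (ne_of_gt hXden) (ne_of_gt hJ2pos')]
      ring
    rw [e, add_div, div_self (ne_of_gt hJ2pos)]
  rw [hXeq]
  calc 1 / (2 * (s ^ 2) ^ 2) * (∫ r in Ioi (0:ℝ), Real.exp (-r ^ 2 / (2 * s ^ 2)) * r ^ 3 *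
        Real.sinh (κ * r) * Real.log (Real.sinh (κ * r) / (κ * r)))
      < 1 / (2 * (s ^ 2) ^ 2) * (κ * J4 + c3 * J3 + c2 * J2) := by
        exact mul_lt_mul_of_pos_left hL (by positivity)
    _ = _ := by
        rw [hcomb, hlogM, hJ4def, hJ3def, hJ2def]
        field_simp
        ring
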